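/- arXiv:1610.06317 — 3 statements merged into one kernel-verified Lean document; each statement's English description precedes it below -/
import Mathlib

section
/- Suppose r ≥ 0 is such that for every trace τ' ε-equivalent to τ and every x₀' with |x₀' - x₀| ≤ δ, the endpoint of τ' from x₀' is within r of the endpoint of τ from x₀. Let a : X → X with monotone discrepancy function β_a be ε-independent of every action in τ (length n ≥ 1), and let β be a common monotone discrepancy function for the actions in τ. Then r' = β_a(r) + γ_{n-1}(ε) satisfies: for every trace σ ε-equivalent to τ·a and every x₀' with |x₀' - x₀| ≤ δ, the endpoint of σ from x₀' is within r' of the endpoint of τ·a from x₀, where γ_{n-1}(ε) = Σ_{i=0}^{n-1} β^i(ε). -/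
/-- Apply a trace (finite sequence of actions) from left to right. -/
def applyTrace {S : Type*} (τ : List (S → S)) (x : S) : S :=
  τ.foldl (fun y f => f y) x

/-- `ε`-independence of two actions on a normed space. -/
def EpsIndep {E : Type*} [NormedAddCommGroup E] (ε : ℝ) (a b : E → E) : Prop :=
  ∀ x : E, ‖a (b x) - b (a x)‖ ≤ ε

/-- One swap of an adjacent pair of `indep`-related actions. -/
def Swap {A : Type*} (indep : A → A → Prop) (τ τ' : List A) : Prop :=
  ∃ (σ η : List A) (a b : A), indep a b ∧ τ = σ ++ a :: b :: η ∧ τ' = σ ++ b :: a :: η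

/-- `ε`-equivalence of traces: reflexive-transitive closure of adjacent swaps. -/
def TraceEquiv {A : Type*} (indep : A → A → Prop) : List A → List A → Prop :=
  Relation.ReflTransGen (Swap indep)

lemma applyTrace_append {S : Type*} (l₁ l₂ : List (S → S)) (x : S) :
    applyTrace (l₁ ++ l₂) x = applyTrace l₂ (applyTrace l₁ x) := by
  simp [applyTrace, List.foldl_append]

lemma applyTrace_cons {S : Type*} (c : S → S) (l : List (S → S)) (x : S) :
    applyTrace (c :: l) x = applyTrace l (c x) := rfl

lemma swap_perm {A : Type*} {indep : A → A → Prop} {t t' : List A} (h : Swap indep t t') :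
    t.Perm t' := by
  obtain ⟨σ, η, a, b, _, rfl, rfl⟩ := h
  exact (List.Perm.append_left σ (List.Perm.swap b a η))

lemma traceEquiv_perm {A : Type*} {indep : A → A → Prop} {t t' : List A}
    (h : TraceEquiv indep t t') : t.Perm t' := by
  induction h with
  | refl => exact List.Perm.refl _
  | tail _ hs ih => exact ih.trans (swap_perm hs)

/-- decomposition of a list equation against an adjacent pair. -/
lemma list_decomp {A : Type*} (a c d : A) (τ₁ τ₂ ρ η : List A)
    (h : τ₁ ++ a :: τ₂ = ρ ++ c :: d :: η) :
    (∃ μ, ρ = τ₁ ++ a :: μ ∧ τ₂ = μ ++ c :: d :: η) ∨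
    (τ₁ = ρ ∧ a = c ∧ τ₂ = d :: η) ∨
    (τ₁ = ρ ++ [c] ∧ a = d ∧ τ₂ = η) ∨
    (∃ μ, τ₁ = ρ ++ c :: d :: μ ∧ η = μ ++ a :: τ₂) := by
  rcases List.append_eq_append_iff.1 h with ⟨μ, h1, h2⟩ | ⟨μ, h1, h2⟩
  · match μ, h2 with
    | [], h2 =>
      simp at h1 h2
      exact Or.inr (Or.inl ⟨h1.symm, h2.1, h2.2⟩)
    | (e :: μ'), h2 =>
      simp at h2
      exact Or.inl ⟨μ', by rw [h1, h2.1], h2.2⟩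
  · match μ, h2 with
    | [], h2 =>
      simp at h1 h2
      exact Or.inr (Or.inl ⟨h1, h2.1.symm, h2.2.symm⟩)
    | [e], h2 =>
      simp at h2
      exact Or.inr (Or.inr (Or.inl ⟨by rw [h1, h2.1], h2.2.1.symm, h2.2.2.symm⟩))
    | (e :: f :: μ''), h2 =>
      simp at h2
      exact Or.inr (Or.inr (Or.inr ⟨μ'', by rw [h1, h2.1, h2.2.1], h2.2.2⟩))

lemma equiv_decomp {A : Type*} {indep : A → A → Prop} {τ : List A} {a : A} {σ : List A}
    (h : TraceEquiv indep (τ ++ [a]) σ) :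
    ∃ τ₁ τ₂ : List A, σ = τ₁ ++ a :: τ₂ ∧ TraceEquiv indep τ (τ₁ ++ τ₂) := by
  induction h with
  | refl =>
    refine ⟨τ, [], by simp, ?_⟩
    rw [List.append_nil]
    exact Relation.ReflTransGen.refl
  | tail _ hs ih =>
    obtain ⟨τ₁, τ₂, rfl, hequiv⟩ := ih
    obtain ⟨ρ, η, c, d, hcd, heq, rfl⟩ := hs
    rcases list_decomp a c d τ₁ τ₂ ρ η heq with
      ⟨μ, rfl, rfl⟩ | ⟨h1, h2, h3⟩ | ⟨h1, h2, h3⟩ | ⟨μ, rfl, rfl⟩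
    · refine ⟨τ₁, μ ++ d :: c :: η, by simp, hequiv.tail ?_⟩
      exact ⟨τ₁ ++ μ, η, c, d, hcd, by simp, by simp⟩
    · subst h1; subst h2; subst h3
      exact ⟨τ₁ ++ [d], η, by simp, by simpa using hequiv⟩
    · subst h1; subst h2; subst h3
      exact ⟨ρ, c :: τ₂, by simp, by simpa using hequiv⟩
    · refine ⟨ρ ++ d :: c :: μ, τ₂, by simp, hequiv.tail ?_⟩
      exact ⟨ρ, μ ++ τ₂, c, d, hcd, by simp, by simp⟩

/-- Discrepancy of a whole trace. -/
lemma trace_disc {E : Type*} [NormedAddCommGroup E] {β : ℝ → ℝ} (hβmono : Monotone β)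
    (η : List (E → E)) (hβ : ∀ c ∈ η, ∀ x x' : E, ‖c x - c x'‖ ≤ β ‖x - x'‖) :
    ∀ x x' : E, ‖applyTrace η x - applyTrace η x'‖ ≤ β^[η.length] ‖x - x'‖ := by
  induction η with
  | nil => intro x x'; simp [applyTrace]
  | cons c η' ih =>
    intro x x'
    rw [applyTrace_cons, applyTrace_cons, List.length_cons, Function.iterate_succ_apply]
    exact (ih (fun g hg => hβ g (List.mem_cons_of_mem _ hg)) (c x) (c x')).trans
      ((hβmono.iterate η'.length) (hβ c List.mem_cons_self x x'))

lemma comm_estimate {E : Type*} [NormedAddCommGroup E] {ε : ℝ} {β : ℝ → ℝ}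
    (hβmono : Monotone β) (a : E → E)
    (η : List (E → E))
    (hβ : ∀ c ∈ η, ∀ x x' : E, ‖c x - c x'‖ ≤ β ‖x - x'‖)
    (hind : ∀ c ∈ η, EpsIndep ε c a) :
    ∀ y : E, ‖applyTrace η (a y) - a (applyTrace η y)‖ ≤
      ∑ i ∈ Finset.range η.length, β^[i] ε := by
  induction η with
  | nil => intro y; simp [applyTrace]
  | cons c η' ih =>
    intro y
    rw [applyTrace_cons, applyTrace_cons, List.length_cons, Finset.sum_range_succ]
    have h1 : ‖applyTrace η' (c (a y)) - applyTrace η' (a (c y))‖ ≤ β^[η'.length] ε :=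
      (trace_disc hβmono η' (fun g hg => hβ g (List.mem_cons_of_mem _ hg)) _ _).trans
        ((hβmono.iterate η'.length) (hind c List.mem_cons_self y))
    have h2 := ih (fun g hg => hβ g (List.mem_cons_of_mem _ hg))
      (fun g hg => hind g (List.mem_cons_of_mem _ hg)) (c y)
    calc ‖applyTrace η' (c (a y)) - a (applyTrace η' (c y))‖
        ≤ ‖applyTrace η' (c (a y)) - applyTrace η' (a (c y))‖ +
          ‖applyTrace η' (a (c y)) - a (applyTrace η' (c y))‖ := by
            simpa [sub_add_sub_cancel] using norm_add_le
              (applyTrace η' (c (a y)) - applyTrace η' (a (c y)))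
              (applyTrace η' (a (c y)) - a (applyTrace η' (c y)))
      _ ≤ β^[η'.length] ε + ∑ i ∈ Finset.range η'.length, β^[i] ε := add_le_add h1 h2
      _ = ∑ i ∈ Finset.range η'.length, β^[i] ε + β^[η'.length] ε := add_comm _ _

/-- Inductive step for the `(δ,ε)`-trace-equivalent discrepancy: if `r` is a ted for
`ξ_{x₀,τ}` and `a` is `ε`-independent of every action of `τ`, then
`β_a(r) + γ_{len(τ)-1}(ε)` is a ted for `ξ_{x₀, τ·a}`. -/
theorem stmt7 {E : Type*} [NormedAddCommGroup E] (ε δ r : ℝ) (hε : 0 ≤ ε)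
    (τ : List (E → E)) (hτ : 1 ≤ τ.length) (a : E → E) (x₀ : E)
    (β βa : ℝ → ℝ) (hβmono : Monotone β) (hβ0 : ∀ d : ℝ, 0 ≤ β d)
    (hβamono : Monotone βa)
    (hβ : ∀ c ∈ τ, ∀ x x' : E, ‖c x - c x'‖ ≤ β ‖x - x'‖)
    (hβa : ∀ x x' : E, ‖a x - a x'‖ ≤ βa ‖x - x'‖)
    (hind : ∀ c ∈ τ, EpsIndep ε c a)
    (hr : ∀ τ', TraceEquiv (EpsIndep ε) τ τ' → ∀ x₀' : E, ‖x₀' - x₀‖ ≤ δ →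
      ‖applyTrace τ' x₀' - applyTrace τ x₀‖ ≤ r) :
    ∀ σ, TraceEquiv (EpsIndep ε) (τ ++ [a]) σ → ∀ x₀' : E, ‖x₀' - x₀‖ ≤ δ →
      ‖applyTrace σ x₀' - applyTrace (τ ++ [a]) x₀‖ ≤
        βa r + ∑ i ∈ Finset.range τ.length, β^[i] ε := by
  intro σ hσ x₀' hx
  obtain ⟨τ₁, τ₂, rfl, hequiv⟩ := equiv_decomp hσ
  have hperm : τ.Perm (τ₁ ++ τ₂) := traceEquiv_perm hequiv
  have hmem : ∀ c ∈ τ₂, c ∈ τ := fun c hc =>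
    hperm.mem_iff.2 (List.mem_append.2 (Or.inr hc))
  have hlen : τ₂.length ≤ τ.length := by
    have := hperm.length_eq
    simp [List.length_append] at this
    omega
  have hnn : ∀ i, 0 ≤ β^[i] ε := by
    intro i
    cases i with
    | zero => simpa using hε
    | succ k => rw [Function.iterate_succ_apply']; exact hβ0 _
  set y := applyTrace τ₁ x₀' with hy
  have hLHS : applyTrace (τ₁ ++ a :: τ₂) x₀' = applyTrace τ₂ (a y) := by
    rw [applyTrace_append, applyTrace_cons]
  have hRHS : applyTrace (τ ++ [a]) x₀ = a (applyTrace τ x₀) := by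
    rw [applyTrace_append]; rfl
  have h1 : ‖applyTrace τ₂ (a y) - a (applyTrace τ₂ y)‖ ≤
      ∑ i ∈ Finset.range τ₂.length, β^[i] ε :=
    comm_estimate hβmono a τ₂ (fun c hc => hβ c (hmem c hc))
      (fun c hc => hind c (hmem c hc)) y
  have h2 : ‖applyTrace τ₂ y - applyTrace τ x₀‖ ≤ r := by
    have := hr (τ₁ ++ τ₂) hequiv x₀' hx
    rwa [applyTrace_append] at this
  have h3 : ‖a (applyTrace τ₂ y) - a (applyTrace τ x₀)‖ ≤ βa r :=
    (hβa _ _).trans (hβamono h2)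
  have hsum : ∑ i ∈ Finset.range τ₂.length, β^[i] ε ≤
      ∑ i ∈ Finset.range τ.length, β^[i] ε :=
    Finset.sum_le_sum_of_subset_of_nonneg (Finset.range_subset_range.2 hlen)
      (fun i _ _ => hnn i)
  rw [hLHS, hRHS]
  calc ‖applyTrace τ₂ (a y) - a (applyTrace τ x₀)‖
      ≤ ‖applyTrace τ₂ (a y) - a (applyTrace τ₂ y)‖ +
        ‖a (applyTrace τ₂ y) - a (applyTrace τ x₀)‖ := by
          simpa [sub_add_sub_cancel] using norm_add_le
            (applyTrace τ₂ (a y) - a (applyTrace τ₂ y))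
            (a (applyTrace τ₂ y) - a (applyTrace τ x₀))
    _ ≤ (∑ i ∈ Finset.range τ₂.length, β^[i] ε) + βa r := add_le_add h1 h3
    _ ≤ (∑ i ∈ Finset.range τ.length, β^[i] ε) + βa r := add_le_add_left hsum _
    _ = βa r + ∑ i ∈ Finset.range τ.length, β^[i] ε := add_comm _ _
end

section
/- Greedy characterization of the earliest equivalent position: assume all actions in τ·a are pairwise distinct and ε-independence is symmetric. Let φ be the subsequence of τ obtained by scanning τ from right to left and keeping τ(t) iff it fails to be ε-independent of some element of the current φ·a. Then len(φ) = eep(τ, a, ε), the minimum over all τ' ≡_ε τ·a of the last position of a in τ'. -/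
/-- `k` is the last position of `a` in `τ`. -/
def IsLastPos {A : Type*} (τ : List A) (a : A) (k : ℕ) : Prop :=
  τ[k]? = some a ∧ ∀ j : ℕ, τ[j]? = some a → j ≤ k

open Classical in
/-- Scan `τ` from right to left, keeping `τ(t)` iff it fails to be independent of some
element of the current `φ·a`. -/
noncomputable def greedy {A : Type*} (indep : A → A → Prop) (a : A) (τ : List A) :
    List A :=
  τ.reverse.foldl (fun φ t => if ∃ b ∈ φ ++ [a], ¬ indep t b then t :: φ else φ) []

namespace Stmt17Aux

open Relation List

variable {A : Type*} {indep : A → A → Prop} {a : A}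

/-- `x` occurs (strictly) before `y` in `l`. -/
def Prec (l : List A) (x y : A) : Prop :=
  ∃ i j : ℕ, i < j ∧ l[i]? = some x ∧ l[j]? = some y

open Classical in
lemma greedy_nil : greedy indep a [] = [] := rfl

open Classical in
lemma greedy_cons (t : A) (τ : List A) :
    greedy indep a (t :: τ) =
      if ∃ b ∈ greedy indep a τ ++ [a], ¬ indep t b then t :: greedy indep a τ
      else greedy indep a τ := by
  simp [greedy, List.foldl_append]

lemma greedy_sublist (τ : List A) : (greedy indep a τ).Sublist τ := by
  induction τ with
  | nil => simp [greedy_nil]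
  | cons t σ ih =>
    rw [greedy_cons]
    split
    · exact ih.cons₂ t
    · exact ih.cons t

lemma swap_perm {l l' : List A} (h : Swap indep l l') : l.Perm l' := by
  obtain ⟨σ, η, p, q, -, rfl, rfl⟩ := h
  exact (List.Perm.append_left σ (List.Perm.swap q p η))

lemma reach_perm {l l' : List A} (h : ReflTransGen (Swap indep) l l') : l.Perm l' := by
  induction h with
  | refl => rfl
  | tail _ h ih => exact ih.trans (swap_perm h)

lemma prec_cons {l : List A} {x y c : A} (h : Prec l x y) : Prec (c :: l) x y := by
  obtain ⟨i, j, hij, hi, hj⟩ := h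
  exact ⟨i + 1, j + 1, by omega, by simpa, by simpa⟩

lemma prec_swap (hsymm : Symmetric indep) {l l' : List A} (h : Swap indep l l')
    {x y : A} (hxy : ¬ indep x y) (hp : Prec l x y) : Prec l' x y := by
  obtain ⟨σ, η, p, q, hpq, rfl, rfl⟩ := h
  obtain ⟨i, j, hij, hi, hj⟩ := hp
  set n := σ.length with hn
  have key : ∀ m : ℕ, (σ ++ q :: p :: η)[if m = n then n + 1 else if m = n + 1 then n else m]?
      = (σ ++ p :: q :: η)[m]? := by
    intro m
    rcases lt_trichotomy m n with hm | hm | hm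
    · have e1 : ¬ (m = n) := by omega
      have e2 : ¬ (m = n + 1) := by omega
      rw [if_neg e1, if_neg e2]
      rw [List.getElem?_append, List.getElem?_append, if_pos (by omega), if_pos (by omega)]
    · subst hm
      rw [if_pos rfl]
      rw [List.getElem?_append_right (by omega), List.getElem?_append_right (by omega)]
      simp [hn]
    · rcases eq_or_lt_of_le (Nat.succ_le_of_lt hm) with hm1 | hm1
      · have e1 : ¬ (m = n) := by omega
        rw [if_neg e1, if_pos hm1.symm]
        rw [List.getElem?_append_right (by omega), List.getElem?_append_right (by omega)]
        simp [← hm1, hn]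
      · have e1 : ¬ (m = n) := by omega
        have e2 : ¬ (m = n + 1) := by omega
        rw [if_neg e1, if_neg e2]
        rw [List.getElem?_append_right (by omega), List.getElem?_append_right (by omega)]
        have h2 : 2 ≤ m - n := by omega
        obtain ⟨r, hr⟩ : ∃ r, m - n = r + 2 := ⟨m - n - 2, by omega⟩
        simp [← hn, hr]
  have hne : ¬ (i = n ∧ j = n + 1) := by
    rintro ⟨rfl, rfl⟩
    have hip : (σ ++ p :: q :: η)[n]? = some p := by
      rw [List.getElem?_append_right (le_refl _)]; simp [hn]
    have hjq : (σ ++ p :: q :: η)[n + 1]? = some q := by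
      rw [List.getElem?_append_right (by omega)]; simp [hn]
    rw [hip] at hi; rw [hjq] at hj
    have hx : p = x := Option.some.inj hi
    have hy : q = y := Option.some.inj hj
    rw [← hx, ← hy] at hxy
    exact hxy hpq
  refine ⟨if i = n then n + 1 else if i = n + 1 then n else i,
          if j = n then n + 1 else if j = n + 1 then n else j, ?_,
          (key i).trans hi, (key j).trans hj⟩
  by_cases h1 : i = n <;> by_cases h2 : j = n + 1 <;>
    by_cases h3 : i = n + 1 <;> by_cases h4 : j = n <;>
    simp only [h1, h2, h3, h4, if_pos, if_neg, if_true, if_false] <;>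
    first | (split_ifs <;> omega) | omega

lemma prec_reach (hsymm : Symmetric indep) {l l' : List A}
    (h : ReflTransGen (Swap indep) l l') {x y : A} (hxy : ¬ indep x y)
    (hp : Prec l x y) : Prec l' x y := by
  induction h with
  | refl => exact hp
  | tail _ hs ih => exact prec_swap hsymm hs hxy ih

lemma prec_trans {l : List A} (hnd : l.Nodup) {x y z : A}
    (h1 : Prec l x y) (h2 : Prec l y z) : Prec l x z := by
  obtain ⟨i, j, hij, hi, hj⟩ := h1
  obtain ⟨j', k, hjk, hj', hk⟩ := h2
  have hjl : j < l.length := by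
    rcases List.getElem?_eq_some_iff.mp hj with ⟨h, -⟩; exact h
  have : j = j' := (List.getElem?_inj hjl hnd).mp (hj.trans hj'.symm)
  exact ⟨i, k, by omega, hi, hk⟩

/-- Every element of the greedy list is chained to `a` via dependent precedences in `τ ++ [a]`. -/
lemma greedy_chain (τ : List A) :
    ∀ x ∈ greedy indep a τ,
      ReflTransGen (fun u v => ¬ indep u v ∧ Prec (τ ++ [a]) u v) x a := by
  induction τ with
  | nil => simp [greedy_nil]
  | cons t σ ih =>
    have hmono : ∀ x ∈ greedy indep a σ,
        ReflTransGen (fun u v => ¬ indep u v ∧ Prec ((t :: σ) ++ [a]) u v) x a := by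
      intro x hx
      refine ReflTransGen.mono ?_ _ _ (ih x hx)
      rintro u v ⟨h1, h2⟩
      exact ⟨h1, by simpa using prec_cons (c := t) h2⟩
    intro x hx
    rw [greedy_cons] at hx
    split at hx
    · rcases List.mem_cons.mp hx with rfl | hx
      · rename_i hd
        obtain ⟨b, hb, hnb⟩ := hd
        rcases List.mem_append.mp hb with hbG | hba
        · -- b ∈ greedy σ : step to b, then chain from b
          have hbσ : b ∈ σ := (greedy_sublist σ).subset hbG
          obtain ⟨j, hj⟩ := List.mem_iff_getElem?.mp hbσ
          have hprec : Prec ((x :: σ) ++ [a]) x b := by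
            refine ⟨0, j + 1, by omega, by simp, ?_⟩
            have hjl : j < σ.length := by
              rcases List.getElem?_eq_some_iff.mp hj with ⟨h, -⟩; exact h
            simp only [List.cons_append, List.getElem?_cons_succ]
            rw [List.getElem?_append, if_pos hjl]; exact hj
          exact ReflTransGen.head ⟨hnb, hprec⟩ (hmono b hbG)
        · have hba : b = a := by simpa using hba
          subst hba
          refine ReflTransGen.single ⟨hnb, ⟨0, σ.length + 1, by omega, by simp, ?_⟩⟩
          simp only [List.cons_append, List.getElem?_cons_succ]
          rw [List.getElem?_append_right (le_refl _)]; simp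
      · exact hmono x hx
    · exact hmono x hx

lemma reach_cons {l l' : List A} (c : A) (h : ReflTransGen (Swap indep) l l') :
    ReflTransGen (Swap indep) (c :: l) (c :: l') := by
  refine ReflTransGen.lift (c :: ·) ?_ _ _ h
  rintro u v ⟨σ, η, p, q, hpq, rfl, rfl⟩
  exact ⟨c :: σ, η, p, q, hpq, rfl, rfl⟩

lemma bubble (hsymm : Symmetric indep) {t : A} {L M : List A}
    (h : ∀ b ∈ L, indep t b) :
    ReflTransGen (Swap indep) (t :: (L ++ M)) (L ++ t :: M) := by
  induction L with
  | nil => exact ReflTransGen.refl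
  | cons b L' ihL =>
    have hstep : Swap indep (t :: b :: (L' ++ M)) (b :: t :: (L' ++ M)) :=
      ⟨[], L' ++ M, t, b, h b (by simp), rfl, rfl⟩
    have := reach_cons (indep := indep) b (ihL (fun c hc => h c (by simp [hc])))
    exact ReflTransGen.head hstep this

open Classical in
lemma reach_greedy (hsymm : Symmetric indep) (τ : List A) :
    ∃ ψ : List A, ReflTransGen (Swap indep) (τ ++ [a])
      (greedy indep a τ ++ a :: ψ) := by
  induction τ with
  | nil =>
      refine ⟨[], ?_⟩
      simp only [greedy_nil, List.nil_append]
      exact Relation.ReflTransGen.refl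
  | cons t σ ih =>
    obtain ⟨ψ, hψ⟩ := ih
    have hstep : ReflTransGen (Swap indep) ((t :: σ) ++ [a])
        (t :: (greedy indep a σ ++ a :: ψ)) := by
      simpa using reach_cons t hψ
    by_cases hd : ∃ b ∈ greedy indep a σ ++ [a], ¬ indep t b
    · refine ⟨ψ, ?_⟩
      rw [greedy_cons, if_pos hd]
      simpa using hstep
    · push_neg at hd
      refine ⟨t :: ψ, ?_⟩
      rw [greedy_cons, if_neg (by push_neg; exact hd)]
      have hbub : ReflTransGen (Swap indep)
          (t :: ((greedy indep a σ ++ [a]) ++ ψ))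
          ((greedy indep a σ ++ [a]) ++ t :: ψ) :=
        bubble hsymm (fun b hb => hd b hb)
      have : ReflTransGen (Swap indep) (t :: (greedy indep a σ ++ a :: ψ))
          (greedy indep a σ ++ a :: t :: ψ) := by
        simpa [List.append_assoc] using hbub
      exact hstep.trans this

end Stmt17Aux

open Stmt17Aux Relation List in
/-- Greedy characterization of the earliest equivalent position: the length of the
greedily constructed `φ` equals `eep(τ,a,ε)`, the minimum over `τ' ≡_ε τ·a` of the
last position of `a` in `τ'`. -/
theorem stmt17 {A : Type*} (indep : A → A → Prop) (hsymm : Symmetric indep)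
    (hirr : ∀ x : A, ¬ indep x x) (τ : List A) (a : A)
    (hnodup : (τ ++ [a]).Nodup) :
    (greedy indep a τ).length =
      sInf {k : ℕ | ∃ τ', Relation.ReflTransGen (Swap indep) (τ ++ [a]) τ' ∧
        IsLastPos τ' a k} := by
  set S := {k : ℕ | ∃ τ', Relation.ReflTransGen (Swap indep) (τ ++ [a]) τ' ∧
        IsLastPos τ' a k} with hS
  -- upper bound: the greedy length is attained
  obtain ⟨ψ, hreach⟩ := reach_greedy (a := a) hsymm τ
  set G := greedy indep a τ with hG
  have hτ'nd : (G ++ a :: ψ).Nodup := (reach_perm hreach).nodup_iff.mp hnodup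
  have hka : (G ++ a :: ψ)[G.length]? = some a := by
    rw [List.getElem?_append_right (le_refl _)]; simp
  have hmemS : G.length ∈ S := by
    refine ⟨G ++ a :: ψ, hreach, hka, ?_⟩
    intro j hj
    have hjl : j < (G ++ a :: ψ).length := by
      rcases List.getElem?_eq_some_iff.mp hj with ⟨h, -⟩; exact h
    have := (List.getElem?_inj hjl hτ'nd).mp (hj.trans hka.symm)
    omega
  -- lower bound
  have hlow : ∀ k ∈ S, G.length ≤ k := by
    rintro k ⟨τ', hr, hlast⟩
    have hτ'nd : τ'.Nodup := (reach_perm hr).nodup_iff.mp hnodup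
    have hsub : G ⊆ τ'.take k := by
      intro x hx
      have hchain := greedy_chain (a := a) τ x hx
      -- x ≠ a since x ∈ τ and a ∉ τ
      have hxτ : x ∈ τ := (greedy_sublist τ).subset hx
      have haτ : a ∉ τ := by
        have := List.disjoint_of_nodup_append hnodup
        intro h; exact this h (by simp)
      have hxa : x ≠ a := by rintro rfl; exact haτ hxτ
      -- Prec τ' x a
      have hprec : Prec τ' x a := by
        have : ∀ u, ReflTransGen (fun u v => ¬ indep u v ∧ Prec (τ ++ [a]) u v) u a →
            u = a ∨ Prec τ' u a := by
          intro u hu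
          induction hu using ReflTransGen.head_induction_on with
          | refl => exact Or.inl rfl
          | head h _ ih =>
            obtain ⟨h1, h2⟩ := h
            have hp : Prec τ' _ _ := prec_reach hsymm hr h1 h2
            rcases ih with rfl | hp2
            · exact Or.inr hp
            · exact Or.inr (prec_trans hτ'nd hp hp2)
        rcases this x hchain with rfl | hp
        · exact absurd rfl hxa
        · exact hp
      obtain ⟨i, j, hij, hi, hj⟩ := hprec
      -- j = k
      have hjk : j ≤ k := hlast.2 j hj
      have hik : i < k := by omega
      rw [List.mem_iff_getElem?]
      exact ⟨i, by rw [List.getElem?_take, if_pos hik]; exact hi⟩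
    have hGnd : G.Nodup := (greedy_sublist τ).nodup (by
      exact (List.nodup_append.mp hnodup).1)
    calc G.length ≤ (τ'.take k).length :=
          (List.subperm_of_subset hGnd hsub).length_le
      _ ≤ k := by simp
  exact le_antisymm (le_csInf ⟨_, hmemS⟩ hlow) (Nat.sInf_le hmemS)
end

section
/- If in a trace τ' ≡_ε τ (obtained from τ by swaps of adjacent ε-independent actions) two actions b and c are not ε-independent and b ≠ c, and in τ the (unique) occurrence of c precedes that of b, then in τ' the occurrence of c also precedes that of b (relative order of non-independent distinct actions is preserved under ε-equivalence). -/
private lemma idx_other {A : Type*} [DecidableEq A] (σ η : List A) (a b' x : A)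
    (hxa : x ≠ a) (hxb : x ≠ b') :
    (σ ++ a :: b' :: η).idxOf x = (σ ++ b' :: a :: η).idxOf x := by
  by_cases hx : x ∈ σ
  · rw [List.idxOf_append_of_mem hx, List.idxOf_append_of_mem hx]
  · rw [List.idxOf_append_of_notMem hx, List.idxOf_append_of_notMem hx,
      List.idxOf_cons_ne _ (Ne.symm hxa), List.idxOf_cons_ne _ (Ne.symm hxb),
      List.idxOf_cons_ne _ (Ne.symm hxb), List.idxOf_cons_ne _ (Ne.symm hxa)]

private lemma idx_notmem {A : Type*} [DecidableEq A] (σ η : List A) (a b' x : A)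
    (hxa : x ≠ a) (hxb : x ≠ b') (hx : x ∉ σ) :
    (σ ++ a :: b' :: η).idxOf x = σ.length + (η.idxOf x + 2) := by
  rw [List.idxOf_append_of_notMem hx, List.idxOf_cons_ne _ (Ne.symm hxa),
    List.idxOf_cons_ne _ (Ne.symm hxb)]

private lemma swap_step {A : Type*} [DecidableEq A] (indep : A → A → Prop)
    (hsymm : Symmetric indep) (hirr : ∀ x : A, ¬ indep x x)
    (τ τ' : List A) (b c : A) (hbc : b ≠ c) (hnind : ¬ indep b c)
    (horder : τ.idxOf c < τ.idxOf b)
    (hswap : Swap indep τ τ') : τ'.idxOf c < τ'.idxOf b := by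
  obtain ⟨σ, η, a, b', hab, rfl, rfl⟩ := hswap
  have hab' : a ≠ b' := fun h => hirr a (h ▸ hab)
  by_cases hba : b = a
  · subst hba
    have hcb' : c ≠ b' := fun h => hnind (h ▸ hab)
    have hca : c ≠ b := Ne.symm hbc
    by_cases hσ : b ∈ σ
    · rw [List.idxOf_append_of_mem hσ] at horder ⊢
      rwa [← idx_other σ η b b' c hca hcb']
    · rw [List.idxOf_append_of_notMem hσ, List.idxOf_cons_self] at horder
      rw [List.idxOf_append_of_notMem hσ, List.idxOf_cons_ne _ (Ne.symm hab'),
        List.idxOf_cons_self]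
      by_cases hcσ : c ∈ σ
      · rw [List.idxOf_append_of_mem hcσ]
        have := List.idxOf_lt_length_iff.2 hcσ
        omega
      · rw [idx_notmem σ η b b' c hca hcb' hcσ] at horder; omega
  · by_cases hbb' : b = b'
    · subst hbb'
      have hca : c ≠ a := fun h => hnind (hsymm (h ▸ hab))
      have hcb : c ≠ b := Ne.symm hbc
      by_cases hσ : b ∈ σ
      · rw [List.idxOf_append_of_mem hσ] at horder ⊢
        rwa [← idx_other σ η a b c hca hcb]
      · rw [List.idxOf_append_of_notMem hσ, List.idxOf_cons_ne _ hab',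
          List.idxOf_cons_self] at horder
        rw [List.idxOf_append_of_notMem hσ, List.idxOf_cons_self]
        by_cases hcσ : c ∈ σ
        · rw [List.idxOf_append_of_mem hcσ]
          have := List.idxOf_lt_length_iff.2 hcσ
          omega
        · rw [idx_notmem σ η a b c hca hcb hcσ] at horder; omega
    · by_cases hca : c = a
      · subst hca
        have hbb'2 : b ≠ b' := hbb'
        by_cases hσ : c ∈ σ
        · rw [List.idxOf_append_of_mem hσ] at horder ⊢
          rwa [← idx_other σ η c b' b hba hbb'2]
        · rw [List.idxOf_append_of_notMem hσ, List.idxOf_cons_self] at horder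
          rw [List.idxOf_append_of_notMem hσ, List.idxOf_cons_ne _ (Ne.symm hab'),
            List.idxOf_cons_self]
          by_cases hbσ : b ∈ σ
          · rw [List.idxOf_append_of_mem hbσ] at horder
            have := List.idxOf_lt_length_iff.2 hbσ
            omega
          · rw [idx_notmem σ η b' c b hbb'2 hba hbσ]; omega
      · by_cases hcb' : c = b'
        · subst hcb'
          by_cases hσ : c ∈ σ
          · rw [List.idxOf_append_of_mem hσ] at horder ⊢
            rwa [← idx_other σ η a c b hba hbb']
          · rw [List.idxOf_append_of_notMem hσ, List.idxOf_cons_ne _ hab',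
              List.idxOf_cons_self] at horder
            rw [List.idxOf_append_of_notMem hσ, List.idxOf_cons_self]
            by_cases hbσ : b ∈ σ
            · rw [List.idxOf_append_of_mem hbσ] at horder
              have := List.idxOf_lt_length_iff.2 hbσ
              omega
            · rw [idx_notmem σ η c a b hbb' hba hbσ]; omega
        · rw [← idx_other σ η a b' b hba hbb', ← idx_other σ η a b' c hca hcb']
          exact horder

/-- The relative order of two distinct, non-independent actions is preserved under
`ε`-equivalence of traces (all actions in `τ` distinct). -/
theorem stmt18 {A : Type*} [DecidableEq A] (indep : A → A → Prop)
    (hsymm : Symmetric indep) (hirr : ∀ x : A, ¬ indep x x)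
    (τ τ' : List A) (hnodup : τ.Nodup) (b c : A)
    (hb : b ∈ τ) (hc : c ∈ τ) (hbc : b ≠ c) (hnind : ¬ indep b c)
    (horder : τ.idxOf c < τ.idxOf b)
    (hequiv : Relation.ReflTransGen (Swap indep) τ τ') :
    τ'.idxOf c < τ'.idxOf b := by
  induction hequiv with
  | refl => exact horder
  | tail _ hstep ih => exact swap_step indep hsymm hirr _ _ b c hbc hnind ih hstep
end
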